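/- Let G be a finite connected network with vertices u != v and let P_1,...,P_k be collections of u-v paths such that every path from u to v belongs to the union of the P_i. Then the effective conductance satisfies C_G(u,v) <= sum_{i=1}^k R_G(P_i)^{-1}. -/

import Mathlib

open Finset

variable {V : Type} [Fintype V] [DecidableEq V]

/-- `p` is a path from `u` to `v`. -/
def IsPathBetween (adj : V → V → Prop) (u v : V) (p : List V) : Prop :=
  p ≠ [] ∧ p.head? = some u ∧ p.getLast? = some v ∧ p.Chain' adj

/-- The effective conductance between `u` and `v`, via the Dirichlet variational formula:
the infimum over potentials `F` with `F u = 1`, `F v = 0` of the Dirichlet energy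
(each unoriented edge counted once; conductances are `c x y = (r x y)⁻¹`). -/
noncomputable def effCond (adj : V → V → Prop) [DecidableRel adj] (r : V → V → ℝ)
    (u v : V) : ℝ :=
  sInf { E : ℝ | ∃ F : V → ℝ, F u = 1 ∧ F v = 0 ∧
    E = (1 / 2) * ∑ x, ∑ y, (if adj x y then (r x y)⁻¹ else 0) * (F x - F y) ^ 2 }

/-- Sum of `w` over the consecutive edges of the path `p`. -/
noncomputable def pathSum (p : List V) (w : V → V → ℝ) : ℝ :=
  ((p.zip p.tail).map fun e => w e.1 e.2).sum

/-- The effective resistance restricted to a collection `Ps` of paths. -/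
noncomputable def restrictedResP (adj : V → V → Prop) (r : V → V → ℝ)
    (Ps : Finset (List V)) : ℝ :=
  sInf { y : ℝ | ∃ rP : List V → V → V → ℝ,
    (∀ p ∈ Ps, ∀ x y, adj x y → 0 < rP p x y) ∧
    (∀ p ∈ Ps, ∀ x y, rP p x y = rP p y x) ∧
    (∀ x y, adj x y → ∑ p ∈ Ps, (rP p x y)⁻¹ ≤ (r x y)⁻¹) ∧
    y = (∑ p ∈ Ps, (pathSum p (rP p))⁻¹)⁻¹ }



open Finset

variable {V : Type} [Fintype V] [DecidableEq V]

namespace EffAux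

/-- consecutive edges of a list -/
def edges (p : List V) : List (V × V) := p.zip p.tail

lemma edges_cons_cons (x y : V) (t : List V) :
    edges (x :: y :: t) = (x, y) :: edges (y :: t) := rfl

lemma chain'_rel_of_mem_edges {R : V → V → Prop} : ∀ {p : List V} {a b : V},
    p.Chain' R → (a, b) ∈ edges p → R a b := by
  intro p
  induction p with
  | nil => intro a b _ h; simp [edges] at h
  | cons x t ih =>
    intro a b hc hm
    cases t with
    | nil => simp [edges] at hm
    | cons y t' =>
      simp only [List.Chain', List.isChain_cons_cons] at hc
      rw [edges_cons_cons, List.mem_cons] at hm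
      rcases hm with hm | hm
      · cases hm; exact hc.1
      · exact ih hc.2 hm

lemma nodup_of_chain'_lt (F : V → ℝ) {p : List V}
    (h : p.Chain' fun a b => F b < F a) : p.Nodup := by
  haveI : IsTrans V (fun a b : V => F b < F a) := ⟨fun a b c hab hbc => lt_trans hbc hab⟩
  exact (List.isChain_iff_pairwise.1 h).imp
    (fun {a b} hab he => absurd hab (by rw [he]; exact lt_irrefl _))

/-- signed unit flow along the edges of `p` -/
noncomputable def net (p : List V) (x y : V) : ℝ :=
  (if (x, y) ∈ edges p then 1 else 0) - (if (y, x) ∈ edges p then 1 else 0)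

lemma net_antisymm (p : List V) (x y : V) : net p x y = - net p y x := by
  simp [net]

lemma snd_mem_tail_of_mem_edges {p : List V} {a b : V} (h : (a, b) ∈ edges p) :
    b ∈ p.tail := (List.of_mem_zip h).2

lemma fst_mem_of_mem_edges {p : List V} {a b : V} (h : (a, b) ∈ edges p) :
    a ∈ p := (List.of_mem_zip h).1

lemma sum_net : ∀ {p : List V}, p.Nodup → ∀ {a b : V}, p.head? = some a →
    p.getLast? = some b → ∀ w,
    ∑ y, net p w y = (if w = a then (1:ℝ) else 0) - (if w = b then 1 else 0) := by
  intro p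
  induction p with
  | nil => intro _ a b h; simp at h
  | cons x t ih =>
    intro hnd a b ha hb w
    simp only [List.head?_cons, Option.some.injEq] at ha
    subst ha
    cases t with
    | nil =>
      simp only [List.getLast?_singleton, Option.some.injEq] at hb
      subst hb
      simp [net, edges]
    | cons y t' =>
      have hxnot : x ∉ y :: t' := (List.nodup_cons.1 hnd).1
      have hxyE : (x, y) ∉ edges (y :: t') := fun h => hxnot (fst_mem_of_mem_edges h)
      have hxy : x ≠ y := fun h => hxnot (h ▸ List.mem_cons_self)
      have hyxE : (y, x) ∉ edges (y :: t') := fun h =>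
        hxnot (List.mem_cons_of_mem _ (snd_mem_tail_of_mem_edges h))
      have hb' : (y :: t').getLast? = some b := by
        rw [← List.getLast?_cons_cons]; exact hb
      have hnet : ∀ z, net (x :: y :: t') w z =
          net (y :: t') w z + ((if w = x ∧ z = y then (1:ℝ) else 0)
            - (if z = x ∧ w = y then 1 else 0)) := by
        intro z
        simp only [net, edges_cons_cons, List.mem_cons, Prod.mk.injEq]
        by_cases h1 : w = x ∧ z = y
        · have : ¬ ((w, z) ∈ edges (y :: t')) := by
            rw [h1.1, h1.2]; exact hxyE
          by_cases h2 : z = x ∧ w = y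
          · exact absurd (h2.1 ▸ h1.2 ▸ rfl : x = y) (by
              intro hxy; exact hxnot (hxy ▸ List.mem_cons_self))
          · simp [h1, h2, this, hxy, hyxE, hxyE]
        · by_cases h2 : z = x ∧ w = y
          · have : ¬ ((z, w) ∈ edges (y :: t')) := by
              rw [h2.1, h2.2]; exact hxyE
            simp [h1, h2, this, hxy, hyxE, hxyE]
          · simp [h1, h2]
      rw [Finset.sum_congr rfl fun z _ => hnet z]
      rw [Finset.sum_add_distrib, ih (List.nodup_cons.1 hnd).2 rfl hb' w]
      have e1 : ∑ z, ((if w = x ∧ z = y then (1:ℝ) else 0)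
          - (if z = x ∧ w = y then 1 else 0))
          = (if w = x then (1:ℝ) else 0) - (if w = y then 1 else 0) := by
        rw [Finset.sum_sub_distrib]
        congr 1
        · by_cases hwx : w = x <;> simp [hwx]
        · by_cases hwy : w = y <;> simp [hwy]
      rw [e1]
      have hlast : (x :: y :: t').getLast? = some b := hb
      ring

end EffAux

namespace EffAux

lemma exists_path (F : V → ℝ) (θ : V → V → ℝ) (u v : V)
    (hasym : ∀ x y, θ x y = - θ y x)
    (hpos : ∀ x y, 0 < θ x y → F y < F x)
    (hdiv : ∀ w, w ≠ u → w ≠ v → ∑ y, θ w y = 0)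
    (hu : ∀ y, 0 ≤ θ u y) :
    ∀ (n : ℕ) (w : V), (univ.filter fun x => F x < F w).card ≤ n →
      (∃ y, 0 < θ w y) → ∃ p : List V, p.head? = some w ∧ p.getLast? = some v ∧
        p.Chain' (fun x y => 0 < θ x y) := by
  intro n
  induction n with
  | zero =>
    intro w hcard ⟨y, hy⟩
    by_cases hyv : y = v
    · exact ⟨[w, y], rfl, by simp [hyv], by simp [List.Chain', List.isChain_cons_cons, hy]⟩
    · exfalso
      have : y ∈ univ.filter fun x => F x < F w := by
        simp [hpos _ _ hy]
      have := Finset.card_pos.2 ⟨y, this⟩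
      omega
  | succ n ih =>
    intro w hcard ⟨y, hy⟩
    by_cases hyv : y = v
    · exact ⟨[w, y], rfl, by simp [hyv], by simp [List.Chain', List.isChain_cons_cons, hy]⟩
    · have hFy : F y < F w := hpos _ _ hy
      have hyu : y ≠ u := by
        intro h; subst h
        have h1 := hu w
        have h2 := hasym y w
        linarith
      have hyw : θ y w < 0 := by
        have := hasym y w; linarith
      have hz : ∃ z, 0 < θ y z := by
        by_contra hco
        push_neg at hco
        have h0 := hdiv y hyu hyv
        have := (Finset.sum_eq_zero_iff_of_nonpos (fun z _ => hco z)).1 h0 w (mem_univ w)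
        linarith
      have hsub : (univ.filter fun x => F x < F y) ⊆
          (univ.filter fun x => F x < F w).erase y := by
        intro x hx
        simp only [mem_filter, mem_univ, true_and] at hx
        refine Finset.mem_erase.2 ⟨fun h => ?_, by simp [lt_trans hx hFy]⟩
        subst h; exact lt_irrefl _ hx
      have hcard' : (univ.filter fun x => F x < F y).card ≤ n := by
        have h1 := Finset.card_le_card hsub
        have h2 : y ∈ univ.filter fun x => F x < F w := by simp [hFy]
        have h3 := Finset.card_erase_of_mem h2
        omega
      obtain ⟨q, hq1, hq2, hq3⟩ := ih y hcard' hz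
      cases q with
      | nil => simp at hq1
      | cons a t =>
        simp only [List.head?_cons, Option.some.injEq] at hq1
        refine ⟨w :: a :: t, rfl, by rw [List.getLast?_cons_cons]; exact hq2, ?_⟩
        exact List.isChain_cons_cons.2 ⟨by rw [hq1]; exact hy, hq3⟩

lemma flow_decomp (F : V → ℝ) (u v : V) (huv : u ≠ v) :
    ∀ (N : ℕ) (θ : V → V → ℝ),
      ((univ ×ˢ univ).filter fun e : V × V => 0 < θ e.1 e.2).card ≤ N →
      (∀ x y, θ x y = - θ y x) →
      (∀ x y, 0 < θ x y → F y < F x) →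
      (∀ w, w ≠ u → w ≠ v → ∑ y, θ w y = 0) →
      (∀ y, 0 ≤ θ u y) →
      ∃ (n : ℕ) (pth : Fin n → List V) (wt : Fin n → ℝ),
        (∀ j, 0 < wt j ∧ (pth j).head? = some u ∧ (pth j).getLast? = some v ∧
          (pth j).Chain' (fun x y => 0 < θ x y)) ∧
        (∀ x y : V, ∑ j, (if (x, y) ∈ edges (pth j) then wt j else 0) ≤ max (θ x y) 0) ∧
        (∑ j, wt j) = ∑ y, θ u y := by
  intro N
  induction N with
  | zero =>
    intro θ hcard hasym hpos hdiv hu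
    have hnone : ∀ x y, ¬ (0 < θ x y) := by
      intro x y h
      have : (x, y) ∈ (univ ×ˢ univ).filter fun e : V × V => 0 < θ e.1 e.2 := by
        simp [h]
      have := Finset.card_pos.2 ⟨_, this⟩
      omega
    refine ⟨0, Fin.elim0, Fin.elim0, fun j => j.elim0, fun x y => ?_, ?_⟩
    · simp [le_max_right]
    · have : ∀ y, θ u y = 0 := fun y => le_antisymm (not_lt.1 (hnone u y)) (hu y)
      simp [this]
  | succ N ih =>
    intro θ hcard hasym hpos hdiv hu
    by_cases hS : ∑ y, θ u y = 0
    · refine ⟨0, Fin.elim0, Fin.elim0, fun j => j.elim0, fun x y => ?_, by simp [hS]⟩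
      simp [le_max_right]
    · have hSpos : 0 < ∑ y, θ u y :=
        lt_of_le_of_ne (Finset.sum_nonneg fun y _ => hu y) (Ne.symm hS)
      have hex : ∃ y, 0 < θ u y := by
        by_contra hco
        push_neg at hco
        exact hS (Finset.sum_eq_zero fun y _ => le_antisymm (hco y) (hu y))
      obtain ⟨p, hp1, hp2, hp3⟩ := exists_path F θ u v hasym hpos hdiv hu
        (univ.filter fun x => F x < F u).card u le_rfl hex
      have hFdec : p.Chain' fun a b => F b < F a := hp3.imp fun _ _ h => hpos _ _ h
      have hnd : p.Nodup := nodup_of_chain'_lt F hFdec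
      -- p has at least one edge
      have hEne : (edges p).toFinset.Nonempty := by
        cases p with
        | nil => simp at hp1
        | cons a t =>
          simp only [List.head?_cons, Option.some.injEq] at hp1
          cases t with
          | nil =>
            simp only [List.getLast?_singleton, Option.some.injEq] at hp2
            exact absurd (hp1.symm.trans hp2) huv
          | cons b t' => exact ⟨(a, b), by simp [edges_cons_cons]⟩
      have himg : ((edges p).toFinset.image fun e => θ e.1 e.2).Nonempty :=
        hEne.image _
      set α := ((edges p).toFinset.image fun e => θ e.1 e.2).min' himg with hα
      have hαle : ∀ e ∈ edges p, α ≤ θ e.1 e.2 := fun e he =>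
        Finset.min'_le _ _ (Finset.mem_image_of_mem _ (List.mem_toFinset.2 he))
      obtain ⟨⟨a₀, b₀⟩, he₀E, heq₀⟩ : ∃ e ∈ edges p, θ e.1 e.2 = α := by
        obtain ⟨e, he, heq⟩ := Finset.mem_image.1 (Finset.min'_mem _ himg)
        exact ⟨e, List.mem_toFinset.1 he, by rw [heq, hα]⟩
      simp only at heq₀
      have hαpos : 0 < α := by
        rw [← heq₀]
        exact chain'_rel_of_mem_edges (R := fun x y => 0 < θ x y) hp3 he₀E
      have hrev : ∀ a b : V, (a, b) ∈ edges p → (b, a) ∉ edges p := by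
        intro a b h1 h2
        have k1 := chain'_rel_of_mem_edges hp3 h1
        have k2 := chain'_rel_of_mem_edges hp3 h2
        have := hasym a b
        linarith
      set θ' : V → V → ℝ := fun x y => θ x y - α * net p x y with hθ'
      have hθ'val : ∀ x y, θ' x y = θ x y - α * net p x y := fun _ _ => rfl
      have hle' : ∀ x y, 0 < θ' x y → 0 < θ x y := by
        intro x y h
        rw [hθ'val] at h
        by_cases h1 : (x, y) ∈ edges p
        · have : net p x y = 1 := by simp [net, h1, hrev _ _ h1]
          rw [this] at h; linarith
        · by_cases h2 : (y, x) ∈ edges p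
          · exfalso
            have : net p x y = -1 := by simp [net, h1, h2]
            rw [this] at h
            have k1 := hαle _ h2
            have k2 := hasym x y
            simp only at k1
            linarith
          · have : net p x y = 0 := by simp [net, h1, h2]
            rw [this] at h; linarith
      have hasym' : ∀ x y, θ' x y = - θ' y x := by
        intro x y
        rw [hθ'val, hθ'val, net_antisymm, hasym x y]; ring
      have hpos' : ∀ x y, 0 < θ' x y → F y < F x := fun x y h => hpos x y (hle' x y h)
      have hdiv' : ∀ w, w ≠ u → w ≠ v → ∑ y, θ' w y = 0 := by
        intro w hw1 hw2
        have : ∑ y, θ' w y = (∑ y, θ w y) - α * ∑ y, net p w y := by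
          rw [Finset.mul_sum, ← Finset.sum_sub_distrib]
        rw [this, hdiv w hw1 hw2, sum_net hnd hp1 hp2 w]
        simp [hw1, hw2]
      -- u is the head of p, so nothing enters u
      have hheadu : ∀ y, (y, u) ∉ edges p := by
        intro y h
        have hm := snd_mem_tail_of_mem_edges h
        cases p with
        | nil => simp at hp1
        | cons a t =>
          simp only [List.head?_cons, Option.some.injEq] at hp1
          rw [← hp1] at hm
          exact (List.nodup_cons.1 hnd).1 hm
      have hu' : ∀ y, 0 ≤ θ' u y := by
        intro y
        rw [hθ'val]
        by_cases h1 : (u, y) ∈ edges p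
        · have : net p u y = 1 := by simp [net, h1, hheadu y]
          rw [this]
          have := hαle _ h1
          simp only at this
          linarith
        · have : net p u y = 0 := by simp [net, h1, hheadu y]
          rw [this]
          have := hu y
          linarith
      -- support decreases
      have hcard' : ((univ ×ˢ univ).filter fun e : V × V => 0 < θ' e.1 e.2).card ≤ N := by
        have hsub : ((univ ×ˢ univ).filter fun e : V × V => 0 < θ' e.1 e.2) ⊆
            ((univ ×ˢ univ).filter fun e : V × V => 0 < θ e.1 e.2) := by
          intro e he
          simp only [Finset.mem_filter] at he ⊢
          exact ⟨he.1, hle' _ _ he.2⟩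
        have hnotin : (a₀, b₀) ∉ ((univ ×ˢ univ).filter fun e : V × V => 0 < θ' e.1 e.2) := by
          simp only [Finset.mem_filter, not_and]
          intro _
          have hnet : net p a₀ b₀ = 1 := by
            simp [net, he₀E, hrev _ _ he₀E]
          rw [hθ'val]
          rw [hnet, heq₀]
          simp
        have hin : (a₀, b₀) ∈ ((univ ×ˢ univ).filter fun e : V × V => 0 < θ e.1 e.2) := by
          simp only [Finset.mem_filter, Finset.mem_product]
          refine ⟨⟨mem_univ _, mem_univ _⟩, ?_⟩
          rw [heq₀]; exact hαpos
        have := Finset.card_lt_card (Finset.ssubset_iff_of_subset hsub |>.2 ⟨(a₀, b₀), hin, hnotin⟩)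
        omega
      obtain ⟨n, pth, wt, hA, hB, hC⟩ := ih θ' hcard' hasym' hpos' hdiv' hu'
      refine ⟨n + 1, Fin.cons p pth, Fin.cons α wt, ?_, ?_, ?_⟩
      · intro j
        refine Fin.cases ?_ ?_ j
        · exact ⟨hαpos, hp1, hp2, hp3⟩
        · intro j'
          obtain ⟨h1, h2, h3, h4⟩ := hA j'
          exact ⟨h1, h2, h3, h4.imp fun _ _ h => hle' _ _ h⟩
      · intro x y
        rw [Fin.sum_univ_succ]
        simp only [Fin.cons_zero, Fin.cons_succ]
        have hB' := hB x y
        by_cases h1 : (x, y) ∈ edges p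
        · have hnet : net p x y = 1 := by simp [net, h1, hrev _ _ h1]
          have hθxy : α ≤ θ x y := hαle _ h1
          have : max (θ' x y) 0 = θ x y - α := by
            rw [hθ'val, hnet]
            simp only [mul_one]
            exact max_eq_left (by linarith)
          rw [this] at hB'
          simp only [h1, if_true]
          have : θ x y ≤ max (θ x y) 0 := le_max_left _ _
          linarith
        · simp only [h1, if_false, zero_add]
          by_cases h2 : (y, x) ∈ edges p
          · have hnet : net p x y = -1 := by simp [net, h1, h2]
            have hθ'le0 : θ' x y ≤ 0 := by
              rw [hθ'val, hnet]
              have k1 := hαle _ h2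
              have k2 := hasym x y
              simp only at k1
              linarith
            rw [max_eq_right hθ'le0] at hB'
            exact le_trans hB' (le_max_right _ _)
          · have hnet : net p x y = 0 := by simp [net, h1, h2]
            have he : θ' x y = θ x y := by rw [hθ'val, hnet]; ring
            rw [he] at hB'
            exact hB'
      · rw [Fin.sum_cons, hC]
        have : ∑ y, θ' u y = (∑ y, θ u y) - α * ∑ y, net p u y := by
          rw [Finset.mul_sum, ← Finset.sum_sub_distrib]
        rw [this, sum_net hnd hp1 hp2 u]
        simp [huv]

end EffAux

namespace EffAux

variable (adj : V → V → Prop) [DecidableRel adj] (r : V → V → ℝ)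

noncomputable def cnd (x y : V) : ℝ := if adj x y then (r x y)⁻¹ else 0

noncomputable def energy (F : V → ℝ) : ℝ :=
  (1 / 2) * ∑ x, ∑ y, cnd adj r x y * (F x - F y) ^ 2

lemma cnd_nonneg (hrpos : ∀ x y, adj x y → 0 < r x y) (x y : V) :
    0 ≤ cnd adj r x y := by
  unfold cnd
  by_cases h : adj x y
  · simp [h, inv_nonneg, (hrpos x y h).le]
  · simp [h]

lemma cnd_symm (hadj : ∀ x y, adj x y → adj y x) (hrsym : ∀ x y, r x y = r y x)
    (x y : V) : cnd adj r x y = cnd adj r y x := by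
  unfold cnd
  by_cases h : adj x y
  · rw [if_pos h, if_pos (hadj x y h), hrsym]
  · rw [if_neg h, if_neg (fun h' => h (hadj y x h'))]

lemma energy_nonneg (hrpos : ∀ x y, adj x y → 0 < r x y) (F : V → ℝ) :
    0 ≤ energy adj r F := by
  unfold energy
  apply mul_nonneg (by norm_num)
  exact Finset.sum_nonneg fun x _ => Finset.sum_nonneg fun y _ =>
    mul_nonneg (cnd_nonneg adj r hrpos x y) (sq_nonneg _)

lemma clampf_lip (a b : ℝ) : |min (max a 0) 1 - min (max b 0) 1| ≤ |a - b| := by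
  have h1 : |max a 0 - max b 0| ≤ |a - b| := abs_max_sub_max_le_abs a b 0
  have h2 := abs_max_sub_max_le_abs (-(max a 0)) (-(max b 0)) (-1)
  rw [max_neg_neg, max_neg_neg, neg_sub_neg, abs_sub_comm] at h2
  calc |max a 0 ⊓ 1 - max b 0 ⊓ 1| ≤ |-(max a 0) - -(max b 0)| := h2
    _ = |max a 0 - max b 0| := by rw [neg_sub_neg, abs_sub_comm]
    _ ≤ |a - b| := h1

lemma clampf_sq (a b : ℝ) : (min (max a 0) 1 - min (max b 0) 1)^2 ≤ (a - b)^2 := by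
  rw [← sq_abs (min (max a 0) 1 - min (max b 0) 1), ← sq_abs (a - b)]
  exact pow_le_pow_left₀ (abs_nonneg _) (clampf_lip a b) 2

lemma exists_minimizer (hrpos : ∀ x y, adj x y → 0 < r x y) (u v : V) (huv : u ≠ v) :
    ∃ F : V → ℝ, F u = 1 ∧ F v = 0 ∧ (∀ x, F x ≤ 1) ∧
      ∀ G : V → ℝ, G u = 1 → G v = 0 → energy adj r F ≤ energy adj r G := by
  have cont : Continuous (energy adj r) := by
    apply Continuous.mul continuous_const
    apply continuous_finset_sum
    intro x _
    apply continuous_finset_sum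
    intro y _
    exact Continuous.mul continuous_const (((continuous_apply x).sub (continuous_apply y)).pow 2)
  set K : Set (V → ℝ) :=
    (Set.univ.pi fun _ => Set.Icc (0:ℝ) 1) ∩ {F | F u = 1 ∧ F v = 0} with hK
  have hKc : IsCompact K := by
    apply IsCompact.inter_right (isCompact_univ_pi fun _ => isCompact_Icc)
    exact ((isClosed_eq (continuous_apply u) continuous_const).inter
      (isClosed_eq (continuous_apply v) continuous_const))
  have hKne : K.Nonempty := by
    refine ⟨fun x => if x = u then 1 else 0, ?_, by simp, by simp [huv.symm]⟩
    intro x _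
    by_cases hx : x = u <;> simp [hx, Set.mem_Icc]
  obtain ⟨F, hFK, hFmin⟩ := hKc.exists_isMinOn hKne cont.continuousOn
  obtain ⟨hFpi, hFu, hFv⟩ := hFK
  refine ⟨F, hFu, hFv, fun x => (hFpi x (Set.mem_univ x)).2, ?_⟩
  intro G hGu hGv
  set G' : V → ℝ := fun x => min (max (G x) 0) 1 with hG'
  have hG'K : G' ∈ K := by
    refine ⟨fun x _ => ?_, by simp [hG', hGu], by simp [hG', hGv]⟩
    constructor
    · exact le_min (le_max_right _ _) zero_le_one
    · exact min_le_right _ _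
  have h1 : energy adj r F ≤ energy adj r G' := hFmin hG'K
  have h2 : energy adj r G' ≤ energy adj r G := by
    unfold energy
    apply mul_le_mul_of_nonneg_left _ (by norm_num)
    apply Finset.sum_le_sum
    intro x _
    apply Finset.sum_le_sum
    intro y _
    exact mul_le_mul_of_nonneg_left (clampf_sq (G x) (G y)) (cnd_nonneg adj r hrpos x y)
  exact le_trans h1 h2

lemma harmonic (hrpos : ∀ x y, adj x y → 0 < r x y)
    (hadj : ∀ x y, adj x y → adj y x) (hrsym : ∀ x y, r x y = r y x)
    (u v : V) (F : V → ℝ)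
    (hmin : ∀ G : V → ℝ, G u = 1 → G v = 0 → energy adj r F ≤ energy adj r G)
    (hFu : F u = 1) (hFv : F v = 0)
    (w : V) (hwu : w ≠ u) (hwv : w ≠ v) :
    ∑ y, cnd adj r w y * (F w - F y) = 0 := by
  set c : V → V → ℝ := cnd adj r with hc
  have hcs : ∀ x y, c x y = c y x := cnd_symm adj r hadj hrsym
  have hcn : ∀ x y, 0 ≤ c x y := cnd_nonneg adj r hrpos
  set A := ∑ y ∈ univ.erase w, c w y with hA
  set B := ∑ y ∈ univ.erase w, c w y * (F w - F y) with hB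
  have hBgoal : ∑ y, c w y * (F w - F y) = B := by
    rw [← Finset.add_sum_erase _ (fun y => c w y * (F w - F y)) (mem_univ w)]
    simp [hB]
  rw [hBgoal]
  have key : ∀ t : ℝ, 0 ≤ t^2 * A + 2 * t * B := by
    intro t
    set G : V → ℝ := fun x => if x = w then F w + t else F x with hG
    have hGw : G w = F w + t := by simp [hG]
    have hGx : ∀ x, x ≠ w → G x = F x := by intro x hx; simp [hG, hx]
    have hGu : G u = 1 := by rw [hGx u (Ne.symm hwu)]; exact hFu
    have hGv : G v = 0 := by rw [hGx v (Ne.symm hwv)]; exact hFv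
    have hmin' := hmin G hGu hGv
    -- expand the energy of G
    have inner : ∀ x, x ≠ w → ∑ y, c x y * (G x - G y)^2
        = (∑ y, c x y * (F x - F y)^2) + (c w x * t^2 + 2*t*(c w x * (F w - F x))) := by
      intro x hx
      rw [← Finset.add_sum_erase _ (fun y => c x y * (G x - G y)^2) (mem_univ w),
        ← Finset.add_sum_erase _ (fun y => c x y * (F x - F y)^2) (mem_univ w)]
      have h1 : ∑ y ∈ univ.erase w, c x y * (G x - G y)^2
          = ∑ y ∈ univ.erase w, c x y * (F x - F y)^2 :=
        Finset.sum_congr rfl fun y hy => by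
          rw [hGx x hx, hGx y (Finset.ne_of_mem_erase hy)]
      rw [h1, hGx x hx, hGw, hcs x w]
      ring
    have innerw : ∑ y, c w y * (G w - G y)^2
        = (∑ y, c w y * (F w - F y)^2)
          + (∑ y ∈ univ.erase w, (c w y * t^2 + 2*t*(c w y * (F w - F y)))) := by
      rw [← Finset.add_sum_erase _ (fun y => c w y * (G w - G y)^2) (mem_univ w),
        ← Finset.add_sum_erase _ (fun y => c w y * (F w - F y)^2) (mem_univ w)]
      have h0 : c w w * (G w - G w)^2 = 0 := by simp
      have h0' : c w w * (F w - F w)^2 = 0 := by simp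
      rw [h0, h0', zero_add, zero_add, ← Finset.sum_add_distrib]
      refine Finset.sum_congr rfl fun y hy => ?_
      rw [hGw, hGx y (Finset.ne_of_mem_erase hy)]
      ring
    have hsplit : ∀ H : V → ℝ, ∑ x, ∑ y, c x y * (H x - H y)^2
        = (∑ y, c w y * (H w - H y)^2)
          + ∑ x ∈ univ.erase w, ∑ y, c x y * (H x - H y)^2 := fun H =>
      (Finset.add_sum_erase _ (fun x => ∑ y, c x y * (H x - H y)^2) (mem_univ w)).symm
    have hEG : ∑ x, ∑ y, c x y * (G x - G y)^2
        = (∑ x, ∑ y, c x y * (F x - F y)^2) + 2 * (t^2 * A + 2 * t * B) := by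
      rw [hsplit G, hsplit F, innerw]
      have h2 : ∑ x ∈ univ.erase w, ∑ y, c x y * (G x - G y)^2
          = ∑ x ∈ univ.erase w, ((∑ y, c x y * (F x - F y)^2)
            + (c w x * t^2 + 2*t*(c w x * (F w - F x)))) :=
        Finset.sum_congr rfl fun x hx => inner x (Finset.ne_of_mem_erase hx)
      rw [h2, Finset.sum_add_distrib, Finset.sum_add_distrib]
      have h3 : ∑ y ∈ univ.erase w, c w y * t^2 = t^2 * A := by
        rw [hA, Finset.mul_sum]
        exact Finset.sum_congr rfl fun y _ => by ring
      have h4 : ∑ y ∈ univ.erase w, 2*t*(c w y * (F w - F y)) = 2 * t * B := by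
        rw [hB, Finset.mul_sum]
      have h5 : ∑ x ∈ univ.erase w, (c w x * t^2 + 2*t*(c w x * (F w - F x)))
          = t^2 * A + 2 * t * B := by
        rw [Finset.sum_add_distrib, h3, h4]
      rw [h5, h3, h4]
      ring
    have : energy adj r G = energy adj r F + (t^2 * A + 2 * t * B) := by
      unfold energy
      rw [hEG]
      ring
    rw [this] at hmin'
    linarith
  -- conclude B = 0
  by_contra hB0
  have hApos : 0 ≤ A := Finset.sum_nonneg fun y _ => hcn w y
  have hd : 0 < A + 1 := by linarith
  have hε : 0 < (A+1)⁻¹ := inv_pos.2 hd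
  have hεA : (A+1)⁻¹ * A < 1 := by
    rw [inv_mul_lt_iff₀ hd]
    linarith
  have hBB : 0 < B^2 := by positivity
  have h := key (-(B * (A+1)⁻¹))
  have hexpand : (-(B * (A+1)⁻¹))^2 * A + 2 * (-(B * (A+1)⁻¹)) * B
      = B^2 * (A+1)⁻¹ * ((A+1)⁻¹ * A - 2) := by ring
  rw [hexpand] at h
  nlinarith [mul_pos hBB hε]

lemma div_u_eq_energy (hadj : ∀ x y, adj x y → adj y x) (hrsym : ∀ x y, r x y = r y x)
    (u v : V) (F : V → ℝ) (hFu : F u = 1) (hFv : F v = 0)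
    (hharm : ∀ w, w ≠ u → w ≠ v → ∑ y, cnd adj r w y * (F w - F y) = 0) :
    ∑ y, cnd adj r u y * (F u - F y) = energy adj r F := by
  set c : V → V → ℝ := cnd adj r with hc
  have hcs : ∀ x y, c x y = c y x := cnd_symm adj r hadj hrsym
  set θ : V → V → ℝ := fun x y => c x y * (F x - F y) with hθ
  have hasym : ∀ x y, θ x y = - θ y x := by
    intro x y
    simp only [hθ]
    rw [hcs x y]
    ring
  have key : ∑ x, ∑ y, c x y * (F x - F y)^2 = 2 * ∑ x, F x * (∑ y, θ x y) := by
    have e1 : ∑ x, ∑ y, c x y * (F x - F y)^2 = ∑ x, ∑ y, (θ x y * F x - θ x y * F y) := by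
      refine Finset.sum_congr rfl fun x _ => Finset.sum_congr rfl fun y _ => ?_
      simp only [hθ]
      ring
    rw [e1]
    have e2 : ∑ x, ∑ y, (θ x y * F x - θ x y * F y)
        = (∑ x, ∑ y, θ x y * F x) - ∑ x, ∑ y, θ x y * F y := by
      rw [← Finset.sum_sub_distrib]
      exact Finset.sum_congr rfl fun x _ => Finset.sum_sub_distrib _ _
    rw [e2]
    have e3 : ∑ x, ∑ y, θ x y * F x = ∑ x, F x * (∑ y, θ x y) := by
      refine Finset.sum_congr rfl fun x _ => ?_
      rw [Finset.mul_sum]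
      exact Finset.sum_congr rfl fun y _ => by ring
    have e4 : ∑ x, ∑ y, θ x y * F y = - ∑ x, F x * (∑ y, θ x y) := by
      rw [Finset.sum_comm]
      rw [← Finset.sum_neg_distrib]
      refine Finset.sum_congr rfl fun y _ => ?_
      rw [Finset.mul_sum, ← Finset.sum_neg_distrib]
      refine Finset.sum_congr rfl fun x _ => ?_
      rw [hasym x y]
      ring
    rw [e3, e4]
    ring
  have hdivsum : ∑ x, F x * (∑ y, θ x y) = ∑ y, θ u y := by
    rw [Finset.sum_eq_single u]
    · rw [hFu, one_mul]
    · intro x _ hx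
      by_cases hxv : x = v
      · rw [hxv, hFv, zero_mul]
      · rw [hharm x hx hxv, mul_zero]
    · intro h
      exact absurd (mem_univ u) h
  unfold energy
  rw [← hc, key, hdivsum]
  ring

end EffAux

namespace EffAux

lemma edges_ne_nil {p : List V} {u v : V} (h1 : p.head? = some u)
    (h2 : p.getLast? = some v) (huv : u ≠ v) : edges p ≠ [] := by
  cases p with
  | nil => simp at h1
  | cons a t =>
    simp only [List.head?_cons, Option.some.injEq] at h1
    cases t with
    | nil =>
      simp only [List.getLast?_singleton, Option.some.injEq] at h2
      exact absurd (h1.symm.trans h2) huv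
    | cons b t' => simp [edges_cons_cons]

lemma edges_nodup {p : List V} (h : p.Nodup) : (edges p).Nodup := by
  have hlen : p.tail.length ≤ p.length := by
    rw [List.length_tail]; omega
  have h1 : (edges p).map Prod.snd = p.tail := List.map_snd_zip hlen
  exact List.Nodup.of_map Prod.snd (by rw [h1]; exact (List.tail_sublist p).nodup h)

lemma max_add_max_neg (a : ℝ) : max a 0 + max (-a) 0 = |a| := by
  rcases le_total 0 a with h | h
  · rw [max_eq_left h, max_eq_right (by linarith), abs_of_nonneg h, add_zero]
  · rw [max_eq_right h, max_eq_left (by linarith), abs_of_nonpos h, zero_add]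

end EffAux

/-- Lemma 2.5: if `Ps 1, ..., Ps k` are collections of `u`-`v` paths such that every (simple)
path from `u` to `v` belongs to some `Ps i`, then
`C(u, v) ≤ ∑ i, R(Ps i)⁻¹`. -/
theorem effCond_le_sum_inv_restricted
    (adj : V → V → Prop) [DecidableRel adj] (r : V → V → ℝ)
    (hadj : ∀ x y, adj x y → adj y x)
    (hrsym : ∀ x y, r x y = r y x)
    (hrpos : ∀ x y, adj x y → 0 < r x y)
    (hconn : ∀ x y : V, ∃ p : List V, IsPathBetween adj x y p)
    (u v : V) (huv : u ≠ v)
    (k : ℕ) (Ps : Fin k → Finset (List V))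
    (hpaths : ∀ i, ∀ p ∈ Ps i, IsPathBetween adj u v p)
    (hcover : ∀ p : List V, IsPathBetween adj u v p → p.Nodup → ∃ i, p ∈ Ps i) :
    effCond adj r u v ≤ ∑ i, (restrictedResP adj r (Ps i))⁻¹ := by
  classical
  have hcn : ∀ x y, 0 ≤ EffAux.cnd adj r x y := EffAux.cnd_nonneg adj r hrpos
  have hcs : ∀ x y, EffAux.cnd adj r x y = EffAux.cnd adj r y x :=
    EffAux.cnd_symm adj r hadj hrsym
  have hsetnn : ∀ i : Fin k, ∀ z ∈ {y : ℝ | ∃ rP : List V → V → V → ℝ,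
      (∀ p ∈ Ps i, ∀ x y, adj x y → 0 < rP p x y) ∧
      (∀ p ∈ Ps i, ∀ x y, rP p x y = rP p y x) ∧
      (∀ x y, adj x y → ∑ p ∈ Ps i, (rP p x y)⁻¹ ≤ (r x y)⁻¹) ∧
      y = (∑ p ∈ Ps i, (pathSum p (rP p))⁻¹)⁻¹}, 0 ≤ z := by
    rintro i z ⟨rP, h1, h2, h3, rfl⟩
    apply inv_nonneg.2
    apply Finset.sum_nonneg
    intro p hp
    apply inv_nonneg.2
    unfold pathSum
    apply List.sum_nonneg
    intro a ha
    obtain ⟨⟨x, y⟩, he, rfl⟩ := List.mem_map.1 ha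
    exact (h1 p hp x y (EffAux.chain'_rel_of_mem_edges (hpaths i p hp).2.2.2 he)).le
  have hres_nn : ∀ i, 0 ≤ restrictedResP adj r (Ps i) := by
    intro i
    unfold restrictedResP
    exact Real.sInf_nonneg (hsetnn i)
  have hRHSnn : ∀ i, (0:ℝ) ≤ (restrictedResP adj r (Ps i))⁻¹ := fun i =>
    inv_nonneg.2 (hres_nn i)
  -- minimizer and its flow
  obtain ⟨F, hFu, hFv, hFle1, hFmin⟩ := EffAux.exists_minimizer adj r hrpos u v huv
  set θ : V → V → ℝ := fun x y => EffAux.cnd adj r x y * (F x - F y) with hθ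
  have hasym : ∀ x y, θ x y = - θ y x := by
    intro x y; simp only [hθ]; rw [hcs x y]; ring
  have hsupp : ∀ x y, 0 < θ x y → adj x y := by
    intro x y h
    by_contra hna
    simp only [hθ, EffAux.cnd, if_neg hna, zero_mul] at h
    exact lt_irrefl _ h
  have hpos : ∀ x y, 0 < θ x y → F y < F x := by
    intro x y h
    by_contra hle
    push_neg at hle
    have h2 : θ x y ≤ 0 := mul_nonpos_of_nonneg_of_nonpos (hcn x y) (by linarith)
    simp only [hθ] at h2
    simp only [hθ] at h
    linarith
  have hdiv : ∀ w, w ≠ u → w ≠ v → ∑ y, θ w y = 0 := fun w hwu hwv =>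
    EffAux.harmonic adj r hrpos hadj hrsym u v F hFmin hFu hFv w hwu hwv
  have hu0 : ∀ y, 0 ≤ θ u y := fun y =>
    mul_nonneg (hcn u y) (by rw [hFu]; linarith [hFle1 y])
  have hSE : ∑ y, θ u y = EffAux.energy adj r F :=
    EffAux.div_u_eq_energy adj r hadj hrsym u v F hFu hFv hdiv
  have heff : effCond adj r u v ≤ EffAux.energy adj r F := by
    unfold effCond
    apply csInf_le
    · refine ⟨0, ?_⟩
      rintro E ⟨G, hGu, hGv, rfl⟩
      exact EffAux.energy_nonneg adj r hrpos G
    · exact ⟨F, hFu, hFv, rfl⟩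
  rcases eq_or_lt_of_le (EffAux.energy_nonneg adj r hrpos F) with hE0 | hEpos
  · refine le_trans heff ?_
    rw [← hE0]
    exact Finset.sum_nonneg fun i _ => hRHSnn i
  -- decompose the flow
  obtain ⟨n, pth, wt, hA, hB, hC⟩ := EffAux.flow_decomp F u v huv
    (((univ ×ˢ univ).filter fun e : V × V => 0 < θ e.1 e.2).card) θ le_rfl hasym hpos hdiv hu0
  rw [hSE] at hC
  have hnpos : 0 < n := by
    rcases Nat.eq_zero_or_pos n with h0 | h
    · subst h0
      simp only [Finset.univ_eq_empty, Finset.sum_empty] at hC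
      rw [← hC] at hEpos
      exact absurd hEpos (lt_irrefl 0)
    · exact h
  have hQprop : ∀ j, IsPathBetween adj u v (pth j) ∧ (pth j).Nodup ∧
      (pth j).Chain' (fun x y => 0 < θ x y) := by
    intro j
    obtain ⟨hw, hh, hl, hch⟩ := hA j
    have hnd := EffAux.nodup_of_chain'_lt F (hch.imp fun _ _ h => hpos _ _ h)
    refine ⟨⟨?_, hh, hl, hch.imp fun _ _ h => hsupp _ _ h⟩, hnd, hch⟩
    intro hnil
    rw [hnil] at hh
    simp at hh
  have hne : Nonempty (Fin k) := by
    obtain ⟨i, _⟩ := hcover (pth ⟨0, hnpos⟩) (hQprop _).1 (hQprop _).2.1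
    exact ⟨i⟩
  set idx : List V → Fin k := fun q =>
    if h : ∃ i, q ∈ Ps i then h.choose else hne.some with hidxdef
  have hidx : ∀ q, (∃ i, q ∈ Ps i) → q ∈ Ps (idx q) := by
    intro q h
    simp only [hidxdef, dif_pos h]
    exact h.choose_spec
  set Q : Finset (List V) := univ.image pth with hQ
  have hmemQ : ∀ j, pth j ∈ Q := fun j => Finset.mem_image_of_mem _ (mem_univ j)
  have hQpath : ∀ q ∈ Q, IsPathBetween adj u v q ∧ q.Nodup ∧
      q.Chain' (fun x y => 0 < θ x y) := by
    intro q hq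
    obtain ⟨j, _, rfl⟩ := Finset.mem_image.1 hq
    exact hQprop j
  have hQPs : ∀ q ∈ Q, q ∈ Ps (idx q) := fun q hq =>
    hidx q (hcover q (hQpath q hq).1 (hQpath q hq).2.1)
  set A : List V → ℝ := fun q => ∑ j, if q = pth j then wt j else 0 with hAdef
  have hAnn : ∀ q, 0 ≤ A q := fun q => Finset.sum_nonneg fun j _ => by
    by_cases h : q = pth j <;> simp [h, (hA j).1.le]
  have hApos : ∀ q ∈ Q, 0 < A q := by
    intro q hq
    obtain ⟨j, _, rfl⟩ := Finset.mem_image.1 hq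
    refine Finset.sum_pos' (fun j' _ => ?_) ⟨j, mem_univ j, by simp [(hA j).1]⟩
    by_cases h : pth j = pth j' <;> simp [h, (hA j').1.le]
  have hedge : ∀ x y : V, ∑ q ∈ Q.filter (fun q => (x, y) ∈ EffAux.edges q), A q
      ≤ max (θ x y) 0 := by
    intro x y
    have e1 : ∑ q ∈ Q.filter (fun q => (x, y) ∈ EffAux.edges q), A q
        = ∑ j, if (x, y) ∈ EffAux.edges (pth j) then wt j else 0 := by
      simp only [hAdef]
      rw [Finset.sum_comm]
      refine Finset.sum_congr rfl fun j _ => ?_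
      rw [Finset.sum_ite_eq' (Q.filter fun q => (x, y) ∈ EffAux.edges q) (pth j)
        (fun _ => wt j)]
      simp [Finset.mem_filter, hmemQ j]
    rw [e1]
    exact hB x y
  have hAsum : ∑ q ∈ Q, A q = EffAux.energy adj r F := by
    rw [← hC]
    simp only [hAdef]
    rw [Finset.sum_comm]
    refine Finset.sum_congr rfl fun j _ => ?_
    rw [Finset.sum_ite_eq' Q (pth j) (fun _ => wt j)]
    simp [hmemQ j]
  set Lt : List V → ℝ := fun q => ((EffAux.edges q).map fun e => r e.1 e.2 * |θ e.1 e.2|).sum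
    with hLt
  have hedgepos : ∀ q ∈ Q, ∀ x y : V, (x, y) ∈ EffAux.edges q → 0 < θ x y ∧ adj x y := by
    intro q hq x y he
    have h1 := EffAux.chain'_rel_of_mem_edges (hQpath q hq).2.2 he
    exact ⟨h1, hsupp _ _ h1⟩
  have hLtpos : ∀ q ∈ Q, 0 < Lt q := by
    intro q hq
    apply List.sum_pos
    · intro z hz
      obtain ⟨⟨x, y⟩, he, rfl⟩ := List.mem_map.1 hz
      obtain ⟨h1, h2⟩ := hedgepos q hq x y he
      exact mul_pos (hrpos x y h2) (abs_pos.2 (ne_of_gt h1))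
    · intro hcontra
      rw [List.map_eq_nil_iff] at hcontra
      exact EffAux.edges_ne_nil (hQpath q hq).1.2.1 (hQpath q hq).1.2.2.1 huv hcontra
  have hrθnn : ∀ x y : V, 0 ≤ r x y * |θ x y| := by
    intro x y
    by_cases h : adj x y
    · exact mul_nonneg (hrpos x y h).le (abs_nonneg _)
    · have h0 : θ x y = 0 := by simp [hθ, EffAux.cnd, h]
      rw [h0]
      simp
  have hLfin : ∀ q ∈ Q, Lt q
      = ∑ x, ∑ y, if (x, y) ∈ EffAux.edges q then r x y * |θ x y| else 0 := by
    intro q hq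
    have hnd : (EffAux.edges q).Nodup := EffAux.edges_nodup (hQpath q hq).2.1
    calc Lt q = ∑ e ∈ (EffAux.edges q).toFinset, r e.1 e.2 * |θ e.1 e.2| :=
          (List.sum_toFinset _ hnd).symm
      _ = ∑ e : V × V, if e ∈ (EffAux.edges q).toFinset then r e.1 e.2 * |θ e.1 e.2| else 0 := by
          rw [Finset.sum_ite_mem, Finset.univ_inter]
      _ = ∑ x, ∑ y, if (x, y) ∈ EffAux.edges q then r x y * |θ x y| else 0 := by
          rw [← Finset.univ_product_univ, Finset.sum_product]
          simp [List.mem_toFinset]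
  have hALt : ∑ q ∈ Q, A q * Lt q ≤ EffAux.energy adj r F := by
    have step1 : ∑ q ∈ Q, A q * Lt q
        = ∑ x, ∑ y, (∑ q ∈ Q.filter (fun q => (x, y) ∈ EffAux.edges q), A q)
          * (r x y * |θ x y|) := by
      have e1 : ∀ q ∈ Q, A q * Lt q
          = ∑ x, ∑ y, (if (x, y) ∈ EffAux.edges q then A q * (r x y * |θ x y|) else 0) := by
        intro q hq
        rw [hLfin q hq, Finset.mul_sum]
        refine Finset.sum_congr rfl fun x _ => ?_
        rw [Finset.mul_sum]
        refine Finset.sum_congr rfl fun y _ => ?_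
        split <;> simp
      rw [Finset.sum_congr rfl e1, Finset.sum_comm]
      refine Finset.sum_congr rfl fun x _ => ?_
      rw [Finset.sum_comm]
      refine Finset.sum_congr rfl fun y _ => ?_
      rw [Finset.sum_filter, Finset.sum_mul]
      refine Finset.sum_congr rfl fun q _ => ?_
      split <;> simp
    have step2 : ∑ q ∈ Q, A q * Lt q
        ≤ ∑ x, ∑ y, (r x y * |θ x y|) * max (θ x y) 0 := by
      rw [step1]
      refine Finset.sum_le_sum fun x _ => Finset.sum_le_sum fun y _ => ?_
      rw [mul_comm]
      exact mul_le_mul_of_nonneg_left (hedge x y) (hrθnn x y)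
    have e2 : ∀ x y : V, (r x y * |θ x y|) * max (θ x y) 0
        = r x y * (max (θ x y) 0)^2 := by
      intro x y
      rcases le_or_gt (θ x y) 0 with h | h
      · rw [max_eq_right h]; ring
      · rw [max_eq_left h.le, abs_of_pos h]; ring
    have e3 : ∀ x y : V, r x y * (θ x y)^2
        = r x y * (max (θ x y) 0)^2 + r x y * (max (θ y x) 0)^2 := by
      intro x y
      have h := hasym y x
      rcases le_or_gt (θ x y) 0 with h1 | h1
      · rw [max_eq_right h1, h, max_eq_left (by linarith)]
        ring
      · rw [max_eq_left h1.le, h, max_eq_right (by linarith)]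
        ring
    have e4 : ∀ x y : V, r x y * (θ x y)^2 = EffAux.cnd adj r x y * (F x - F y)^2 := by
      intro x y
      simp only [hθ, EffAux.cnd]
      split_ifs with h
      · have := (hrpos x y h).ne'
        field_simp
      · ring
    have e5 : ∑ x, ∑ y, r x y * (max (θ y x) 0)^2
        = ∑ x, ∑ y, r x y * (max (θ x y) 0)^2 := by
      rw [Finset.sum_comm]
      refine Finset.sum_congr rfl fun x _ => Finset.sum_congr rfl fun y _ => ?_
      rw [hrsym y x]
    have step3 : ∑ x, ∑ y, (r x y * |θ x y|) * max (θ x y) 0 = EffAux.energy adj r F := by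
      calc ∑ x, ∑ y, (r x y * |θ x y|) * max (θ x y) 0
          = ∑ x, ∑ y, r x y * (max (θ x y) 0)^2 :=
            Finset.sum_congr rfl fun x _ => Finset.sum_congr rfl fun y _ => e2 x y
        _ = EffAux.energy adj r F := by
            have h7 : ∑ x, ∑ y, EffAux.cnd adj r x y * (F x - F y)^2
                = 2 * ∑ x, ∑ y, r x y * (max (θ x y) 0)^2 := by
              have hxx : ∀ x : V, ∑ y, EffAux.cnd adj r x y * (F x - F y)^2
                  = (∑ y, r x y * (max (θ x y) 0)^2)
                    + ∑ y, r x y * (max (θ y x) 0)^2 := by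
                intro x
                rw [← Finset.sum_add_distrib]
                refine Finset.sum_congr rfl fun y _ => ?_
                rw [← e4 x y]
                exact e3 x y
              rw [Finset.sum_congr rfl fun x _ => hxx x, Finset.sum_add_distrib, e5, two_mul]
            unfold EffAux.energy
            rw [h7]
            ring
    exact le_trans step2 (le_of_eq step3)
  have hQsumLB : EffAux.energy adj r F ≤ ∑ q ∈ Q, A q / Lt q := by
    have h1 : (EffAux.energy adj r F)^2
        ≤ (∑ q ∈ Q, A q * Lt q) * (∑ q ∈ Q, A q / Lt q) := by
      have hcs2 := Finset.sum_mul_sq_le_sq_mul_sq Q (fun q => Real.sqrt (A q * Lt q))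
        (fun q => Real.sqrt (A q / Lt q))
      have e1 : ∑ q ∈ Q, Real.sqrt (A q * Lt q) * Real.sqrt (A q / Lt q)
          = EffAux.energy adj r F := by
        rw [← hAsum]
        refine Finset.sum_congr rfl fun q hq => ?_
        rw [← Real.sqrt_mul (mul_nonneg (hAnn q) (hLtpos q hq).le)]
        have hq2 : A q * Lt q * (A q / Lt q) = (A q)^2 := by
          field_simp [(hLtpos q hq).ne']
        rw [hq2, Real.sqrt_sq (hAnn q)]
      have e2 : ∑ q ∈ Q, (Real.sqrt (A q * Lt q))^2 = ∑ q ∈ Q, A q * Lt q :=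
        Finset.sum_congr rfl fun q hq =>
          Real.sq_sqrt (mul_nonneg (hAnn q) (hLtpos q hq).le)
      have e3 : ∑ q ∈ Q, (Real.sqrt (A q / Lt q))^2 = ∑ q ∈ Q, A q / Lt q :=
        Finset.sum_congr rfl fun q hq =>
          Real.sq_sqrt (div_nonneg (hAnn q) (hLtpos q hq).le)
      rw [e1, e2, e3] at hcs2
      exact hcs2
    have h2 : (∑ q ∈ Q, A q * Lt q) * (∑ q ∈ Q, A q / Lt q)
        ≤ (EffAux.energy adj r F) * (∑ q ∈ Q, A q / Lt q) :=
      mul_le_mul_of_nonneg_right hALt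
        (Finset.sum_nonneg fun q hq => div_nonneg (hAnn q) (hLtpos q hq).le)
    have h3 : (EffAux.energy adj r F) * (EffAux.energy adj r F)
        ≤ (EffAux.energy adj r F) * (∑ q ∈ Q, A q / Lt q) := by
      calc (EffAux.energy adj r F) * (EffAux.energy adj r F)
          = (EffAux.energy adj r F)^2 := by ring
        _ ≤ _ := le_trans h1 h2
    exact le_of_mul_le_mul_left h3 hEpos
  -- per-collection bound, with slack ε
  have hmain : ∀ ε : ℝ, 0 < ε →
      EffAux.energy adj r F ≤ (1 + ε) * ∑ i, (restrictedResP adj r (Ps i))⁻¹ := by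
    intro ε hε
    have hε1 : (0:ℝ) < 1 + ε := by linarith
    have hkey : ∀ i : Fin k,
        (1 + ε)⁻¹ * ∑ q ∈ Q.filter (fun q => idx q = i), A q / Lt q
        ≤ (restrictedResP adj r (Ps i))⁻¹ := by
      intro i
      rcases Finset.eq_empty_or_nonempty (Ps i) with hPse | hPsne
      · have hfe : Q.filter (fun q => idx q = i) = ∅ := by
          rw [Finset.filter_eq_empty_iff]
          intro q hq hqi
          have hmem := hQPs q hq
          rw [hqi] at hmem
          simp [hPse] at hmem
        rw [hfe, Finset.sum_empty, mul_zero]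
        exact hRHSnn i
      · have hMpos : (0:ℝ) < (Ps i).card := by
          exact_mod_cast Finset.card_pos.2 hPsne
        set rP : List V → V → V → ℝ := fun q x y =>
          if q ∈ Q ∧ idx q = i ∧ ((x, y) ∈ EffAux.edges q ∨ (y, x) ∈ EffAux.edges q)
          then (1 + ε) * (r x y * |θ x y| / A q)
          else ((1 + ε) / ε) * ((Ps i).card * r x y) with hrP
        have habs : ∀ q x y, q ∈ Q →
            ((x, y) ∈ EffAux.edges q ∨ (y, x) ∈ EffAux.edges q) → 0 < |θ x y| := by
          intro q x y hq hor
          rcases hor with h | h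
          · exact abs_pos.2 (ne_of_gt (hedgepos q hq x y h).1)
          · have h1 := (hedgepos q hq y x h).1
            have h2 : θ x y = - θ y x := hasym x y
            rw [h2, abs_neg]
            exact abs_pos.2 (ne_of_gt h1)
        have hrPpos : ∀ p ∈ Ps i, ∀ x y, adj x y → 0 < rP p x y := by
          intro p hp x y hxy
          simp only [hrP]
          split_ifs with h
          · exact mul_pos hε1 (div_pos (mul_pos (hrpos x y hxy)
              (habs p x y h.1 h.2.2)) (hApos p h.1))
          · exact mul_pos (div_pos hε1 hε) (mul_pos hMpos (hrpos x y hxy))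
        have hrPsym : ∀ p ∈ Ps i, ∀ x y, rP p x y = rP p y x := by
          intro p _ x y
          simp only [hrP]
          have habs2 : |θ x y| = |θ y x| := by rw [hasym x y, abs_neg]
          by_cases h : p ∈ Q ∧ idx p = i ∧
              ((x, y) ∈ EffAux.edges p ∨ (y, x) ∈ EffAux.edges p)
          · rw [if_pos h, if_pos ⟨h.1, h.2.1, or_comm.1 h.2.2⟩, hrsym x y, habs2]
          · rw [if_neg h, if_neg (fun h' => h ⟨h'.1, h'.2.1, or_comm.1 h'.2.2⟩), hrsym x y]
        have hrPcon : ∀ x y, adj x y → ∑ p ∈ Ps i, (rP p x y)⁻¹ ≤ (r x y)⁻¹ := by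
          intro x y hxy
          have hrxy := hrpos x y hxy
          set cond : List V → Prop := fun q =>
            q ∈ Q ∧ idx q = i ∧ ((x, y) ∈ EffAux.edges q ∨ (y, x) ∈ EffAux.edges q)
            with hcond
          rw [← Finset.sum_filter_add_sum_filter_not (Ps i) cond]
          have hpartA : ∑ p ∈ (Ps i).filter cond, (rP p x y)⁻¹
              ≤ (1 + ε)⁻¹ * (r x y)⁻¹ := by
            rcases Finset.eq_empty_or_nonempty ((Ps i).filter cond) with hfe | hfne
            · rw [hfe, Finset.sum_empty]
              positivity
            · obtain ⟨q₀, hq₀⟩ := hfne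
              have hcondq₀ : cond q₀ := (Finset.mem_filter.1 hq₀).2
              have hθab : 0 < |θ x y| := habs q₀ x y hcondq₀.1 hcondq₀.2.2
              have e1 : ∀ q ∈ (Ps i).filter cond, (rP q x y)⁻¹
                  = A q * ((1 + ε) * (r x y * |θ x y|))⁻¹ := by
                intro q hq
                have hcq : cond q := (Finset.mem_filter.1 hq).2
                simp only [hrP]
                rw [if_pos hcq]
                have hAq := hApos q hcq.1
                field_simp
              rw [Finset.sum_congr rfl e1, ← Finset.sum_mul]
              have hAle : ∑ q ∈ (Ps i).filter cond, A q ≤ |θ x y| := by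
                have hsplit := Finset.sum_filter_add_sum_filter_not ((Ps i).filter cond)
                  (fun q => (x, y) ∈ EffAux.edges q) A
                have hs1 : ((Ps i).filter cond).filter (fun q => (x, y) ∈ EffAux.edges q)
                    ⊆ Q.filter (fun q => (x, y) ∈ EffAux.edges q) := by
                  intro q hq
                  simp only [Finset.mem_filter] at hq ⊢
                  exact ⟨hq.1.2.1, hq.2⟩
                have hs2 : ((Ps i).filter cond).filter (fun q => ¬ (x, y) ∈ EffAux.edges q)
                    ⊆ Q.filter (fun q => (y, x) ∈ EffAux.edges q) := by
                  intro q hq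
                  simp only [Finset.mem_filter] at hq ⊢
                  rcases hq.1.2.2.2 with h | h
                  · exact absurd h hq.2
                  · exact ⟨hq.1.2.1, h⟩
                have hb1 := le_trans (Finset.sum_le_sum_of_subset_of_nonneg hs1
                  (fun q _ _ => hAnn q)) (hedge x y)
                have hb2 := le_trans (Finset.sum_le_sum_of_subset_of_nonneg hs2
                  (fun q _ _ => hAnn q)) (hedge y x)
                have hmm : max (θ x y) 0 + max (θ y x) 0 = |θ x y| := by
                  rw [hasym y x]
                  exact EffAux.max_add_max_neg (θ x y)
                linarith [hsplit]
              calc (∑ q ∈ (Ps i).filter cond, A q) * ((1 + ε) * (r x y * |θ x y|))⁻¹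
                  ≤ |θ x y| * ((1 + ε) * (r x y * |θ x y|))⁻¹ := by
                    apply mul_le_mul_of_nonneg_right hAle
                    positivity
                _ = (1 + ε)⁻¹ * (r x y)⁻¹ := by
                    field_simp
          have hpartB : ∑ p ∈ (Ps i).filter (fun q => ¬ cond q), (rP p x y)⁻¹
              ≤ (ε / (1 + ε)) * (r x y)⁻¹ := by
            have e1 : ∀ q ∈ (Ps i).filter (fun q => ¬ cond q), (rP q x y)⁻¹
                = (((1 + ε) / ε) * ((Ps i).card * r x y))⁻¹ := by
              intro q hq
              have hcq := (Finset.mem_filter.1 hq).2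
              simp only [hrP]
              rw [if_neg hcq]
            rw [Finset.sum_congr rfl e1, Finset.sum_const, nsmul_eq_mul]
            have h1 : ((((Ps i).filter (fun q => ¬ cond q)).card : ℝ)) ≤ (Ps i).card := by
              exact_mod_cast Finset.card_filter_le (Ps i) (fun q => ¬ cond q)
            calc (((Ps i).filter (fun q => ¬ cond q)).card : ℝ)
                  * (((1 + ε) / ε) * ((Ps i).card * r x y))⁻¹
                ≤ ((Ps i).card : ℝ) * (((1 + ε) / ε) * ((Ps i).card * r x y))⁻¹ := by
                  apply mul_le_mul_of_nonneg_right h1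
                  positivity
              _ = (ε / (1 + ε)) * (r x y)⁻¹ := by
                  field_simp
          have hsum : (1 + ε)⁻¹ * (r x y)⁻¹ + (ε / (1 + ε)) * (r x y)⁻¹ = (r x y)⁻¹ := by
            field_simp
          linarith [hpartA, hpartB]
        have hbdd : BddBelow {y : ℝ | ∃ rP' : List V → V → V → ℝ,
            (∀ p ∈ Ps i, ∀ x y, adj x y → 0 < rP' p x y) ∧
            (∀ p ∈ Ps i, ∀ x y, rP' p x y = rP' p y x) ∧
            (∀ x y, adj x y → ∑ p ∈ Ps i, (rP' p x y)⁻¹ ≤ (r x y)⁻¹) ∧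
            y = (∑ p ∈ Ps i, (pathSum p (rP' p))⁻¹)⁻¹} :=
          ⟨0, fun z hz => hsetnn i z hz⟩
        have hle1 : restrictedResP adj r (Ps i)
            ≤ (∑ p ∈ Ps i, (pathSum p (rP p))⁻¹)⁻¹ := by
          unfold restrictedResP
          exact csInf_le hbdd ⟨rP, hrPpos, hrPsym, hrPcon, rfl⟩
        have hpathr : ∀ p ∈ Ps i, 0 < pathSum p r := by
          intro p hp
          obtain ⟨hne', hh, hl, hch⟩ := hpaths i p hp
          apply List.sum_pos
          · intro z hz
            obtain ⟨⟨x, y⟩, he, rfl⟩ := List.mem_map.1 hz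
            exact hrpos x y (EffAux.chain'_rel_of_mem_edges hch he)
          · intro hcontra
            rw [List.map_eq_nil_iff] at hcontra
            exact EffAux.edges_ne_nil hh hl huv hcontra
        have hc₀ : 0 < (∑ p ∈ Ps i, (pathSum p r)⁻¹) :=
          Finset.sum_pos (fun p hp => inv_pos.2 (hpathr p hp)) hPsne
        have hrlb : ∀ z ∈ {y : ℝ | ∃ rP' : List V → V → V → ℝ,
            (∀ p ∈ Ps i, ∀ x y, adj x y → 0 < rP' p x y) ∧
            (∀ p ∈ Ps i, ∀ x y, rP' p x y = rP' p y x) ∧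
            (∀ x y, adj x y → ∑ p ∈ Ps i, (rP' p x y)⁻¹ ≤ (r x y)⁻¹) ∧
            y = (∑ p ∈ Ps i, (pathSum p (rP' p))⁻¹)⁻¹},
            (∑ p ∈ Ps i, (pathSum p r)⁻¹)⁻¹ ≤ z := by
          rintro z ⟨rPz, hz1, hz2, hz3, rfl⟩
          have hmono : ∀ p ∈ Ps i, pathSum p r ≤ pathSum p (rPz p) := by
            intro p hp
            apply List.sum_le_sum
            intro e he
            obtain ⟨x, y⟩ := e
            have hadje : adj x y :=
              EffAux.chain'_rel_of_mem_edges (hpaths i p hp).2.2.2 he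
            have hrzp : 0 < rPz p x y := hz1 p hp x y hadje
            have hinvle : (rPz p x y)⁻¹ ≤ (r x y)⁻¹ := by
              refine le_trans ?_ (hz3 x y hadje)
              exact Finset.single_le_sum (f := fun p' => (rPz p' x y)⁻¹)
                (fun p' hp' => inv_nonneg.2 (hz1 p' hp' x y hadje).le) hp
            exact (inv_le_inv₀ hrzp (hrpos x y hadje)).1 hinvle
          have hzpos : 0 < ∑ p ∈ Ps i, (pathSum p (rPz p))⁻¹ :=
            Finset.sum_pos (fun p hp => inv_pos.2
              (lt_of_lt_of_le (hpathr p hp) (hmono p hp))) hPsne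
          have hsum_le : ∑ p ∈ Ps i, (pathSum p (rPz p))⁻¹
              ≤ ∑ p ∈ Ps i, (pathSum p r)⁻¹ :=
            Finset.sum_le_sum fun p hp => inv_anti₀ (hpathr p hp) (hmono p hp)
          exact inv_anti₀ hzpos hsum_le
        have hrespos : 0 < restrictedResP adj r (Ps i) := by
          have hlow : (∑ p ∈ Ps i, (pathSum p r)⁻¹)⁻¹ ≤ restrictedResP adj r (Ps i) := by
            unfold restrictedResP
            exact le_csInf ⟨_, ⟨rP, hrPpos, hrPsym, hrPcon, rfl⟩⟩ hrlb
          exact lt_of_lt_of_le (inv_pos.2 hc₀) hlow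
        have hfin1 : (∑ p ∈ Ps i, (pathSum p (rP p))⁻¹)
            ≤ (restrictedResP adj r (Ps i))⁻¹ := by
          have h := inv_anti₀ hrespos hle1
          rwa [inv_inv] at h
        have hQisub : Q.filter (fun q => idx q = i) ⊆ Ps i := by
          intro q hq
          obtain ⟨hq1, hq2⟩ := Finset.mem_filter.1 hq
          rw [← hq2]
          exact hQPs q hq1
        have hps_nonneg : ∀ p ∈ Ps i, 0 ≤ (pathSum p (rP p))⁻¹ := by
          intro p hp
          apply inv_nonneg.2
          apply List.sum_nonneg
          intro z hz
          obtain ⟨⟨x, y⟩, he, rfl⟩ := List.mem_map.1 hz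
          exact (hrPpos p hp x y
            (EffAux.chain'_rel_of_mem_edges (hpaths i p hp).2.2.2 he)).le
        have hval : ∀ q ∈ Q.filter (fun q => idx q = i),
            (pathSum q (rP q))⁻¹ = (1 + ε)⁻¹ * (A q / Lt q) := by
          intro q hq
          obtain ⟨hq1, hq2⟩ := Finset.mem_filter.1 hq
          have hps : pathSum q (rP q) = ((1 + ε) / A q) * Lt q := by
            unfold pathSum
            have e1 : ∀ e ∈ q.zip q.tail, rP q e.1 e.2
                = ((1 + ε) / A q) * (r e.1 e.2 * |θ e.1 e.2|) := by
              intro e he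
              obtain ⟨x, y⟩ := e
              simp only [hrP]
              rw [if_pos ⟨hq1, hq2, Or.inl he⟩]
              ring
            rw [List.map_congr_left e1, List.sum_map_mul_left]
            simp only [hLt, EffAux.edges]
          rw [hps]
          have hAq := hApos q hq1
          have hLq := hLtpos q hq1
          field_simp
        calc (1 + ε)⁻¹ * ∑ q ∈ Q.filter (fun q => idx q = i), A q / Lt q
            = ∑ q ∈ Q.filter (fun q => idx q = i), (1 + ε)⁻¹ * (A q / Lt q) :=
              Finset.mul_sum _ _ _
          _ = ∑ q ∈ Q.filter (fun q => idx q = i), (pathSum q (rP q))⁻¹ :=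
              (Finset.sum_congr rfl hval).symm
          _ ≤ ∑ p ∈ Ps i, (pathSum p (rP p))⁻¹ :=
              Finset.sum_le_sum_of_subset_of_nonneg hQisub (fun p hp _ => hps_nonneg p hp)
          _ ≤ (restrictedResP adj r (Ps i))⁻¹ := hfin1
    have htot : (1 + ε)⁻¹ * EffAux.energy adj r F
        ≤ ∑ i, (restrictedResP adj r (Ps i))⁻¹ := by
      calc (1 + ε)⁻¹ * EffAux.energy adj r F
          ≤ (1 + ε)⁻¹ * ∑ q ∈ Q, A q / Lt q := by
            apply mul_le_mul_of_nonneg_left hQsumLB (by positivity)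
        _ = ∑ i, (1 + ε)⁻¹ * ∑ q ∈ Q.filter (fun q => idx q = i), A q / Lt q := by
            rw [← Finset.sum_fiberwise Q idx (fun q => A q / Lt q), Finset.mul_sum]
        _ ≤ ∑ i, (restrictedResP adj r (Ps i))⁻¹ := Finset.sum_le_sum fun i _ => hkey i
    rw [← inv_mul_le_iff₀ hε1]
    exact htot
  refine le_trans heff ?_
  have hRHS0 : 0 ≤ ∑ i, (restrictedResP adj r (Ps i))⁻¹ :=
    Finset.sum_nonneg fun i _ => hRHSnn i
  apply le_of_forall_pos_le_add
  intro δ hδ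
  rcases eq_or_lt_of_le hRHS0 with h0 | hpos'
  · have h2 := hmain 1 one_pos
    rw [← h0, mul_zero] at h2
    rw [← h0, zero_add]
    linarith
  · have h2 := hmain (δ / ∑ i, (restrictedResP adj r (Ps i))⁻¹) (div_pos hδ hpos')
    calc EffAux.energy adj r F
        ≤ (1 + δ / ∑ i, (restrictedResP adj r (Ps i))⁻¹)
          * ∑ i, (restrictedResP adj r (Ps i))⁻¹ := h2
      _ = (∑ i, (restrictedResP adj r (Ps i))⁻¹) + δ := by
          rw [add_mul, one_mul, div_mul_cancel₀ δ hpos'.ne']
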